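/- Let n ≥ 2, let U ⊆ ℝⁿ be open, let f : U → ℝ be a positive C³ function and let u : U → ℝ be a C³ function satisfying Δu = −1 + (Δf/f)·u on U, and define the vector field X = f·∇(|∇u|²) + (2/n)·f·∇u − (Hess f)·∇(u²) − (2/n)·u·∇f − 2u·(Hess u)·∇f + (2u²/f)·(Hess f)·∇f on U. If at every point x ∈ U the matrix (Δf(x))·Iₙ − Hess f(x) is positive semidefinite (the flat substatic condition), then div X ≥ 0 on U; more precisely, div X ≥ 2f·‖Hess u − (Δu/n)·Iₙ − (u/f)·(Hess f − (Δf/n)·Iₙ)‖_F² at every point of U. -/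

import Mathlib

open scoped BigOperators

/-- Partial derivative `∂ᵢ v` of a scalar function on `ℝⁿ = Fin n → ℝ`. -/
noncomputable def pd {n : ℕ} (i : Fin n) (v : (Fin n → ℝ) → ℝ) (x : Fin n → ℝ) : ℝ :=
  fderiv ℝ v x (Pi.single i 1)

/-- Gradient `∇v`. -/
noncomputable def grad {n : ℕ} (v : (Fin n → ℝ) → ℝ) (x : Fin n → ℝ) : Fin n → ℝ :=
  fun i => pd i v x

/-- Hessian matrix `(∂ᵢ∂ⱼ v)ᵢⱼ`. -/
noncomputable def hess {n : ℕ} (v : (Fin n → ℝ) → ℝ) (x : Fin n → ℝ) :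
    Matrix (Fin n) (Fin n) ℝ :=
  fun i j => pd i (fun y => pd j v y) x

/-- Laplacian `Δv = tr (Hess v)`. -/
noncomputable def lap {n : ℕ} (v : (Fin n → ℝ) → ℝ) (x : Fin n → ℝ) : ℝ :=
  ∑ i, hess v x i i

/-- Divergence of a vector field. -/
noncomputable def divg {n : ℕ} (X : (Fin n → ℝ) → (Fin n → ℝ)) (x : Fin n → ℝ) : ℝ :=
  ∑ i, pd i (fun y => X y i) x

/-- Euclidean inner product. -/
def dotp {n : ℕ} (a b : Fin n → ℝ) : ℝ := ∑ i, a i * b i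

/-- Frobenius inner product of matrices. -/
def frobInner {n : ℕ} (A B : Matrix (Fin n) (Fin n) ℝ) : ℝ := ∑ i, ∑ j, A i j * B i j

/-- Squared Frobenius norm of a matrix. -/
def frobSq {n : ℕ} (A : Matrix (Fin n) (Fin n) ℝ) : ℝ := ∑ i, ∑ j, (A i j) ^ 2

section helpers
variable {n : ℕ} {x : Fin n → ℝ} {v w : (Fin n → ℝ) → ℝ} {i j : Fin n}

lemma pd_congr (h : v =ᶠ[nhds x] w) : pd i v x = pd i w x := by
  unfold pd; rw [Filter.EventuallyEq.fderiv_eq h]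

lemma pd_add (hv : DifferentiableAt ℝ v x) (hw : DifferentiableAt ℝ w x) :
    pd i (fun y => v y + w y) x = pd i v x + pd i w x := by
  unfold pd; rw [fderiv_fun_add hv hw]; rfl

lemma pd_mul (hv : DifferentiableAt ℝ v x) (hw : DifferentiableAt ℝ w x) :
    pd i (fun y => v y * w y) x = pd i v x * w x + v x * pd i w x := by
  unfold pd; rw [fderiv_fun_mul hv hw]; simp; ring

lemma pd_const (c : ℝ) : pd i (fun _ => c) x = 0 := by
  unfold pd; rw [fderiv_fun_const]; simp

lemma pd_sub (hv : DifferentiableAt ℝ v x) (hw : DifferentiableAt ℝ w x) :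
    pd i (fun y => v y - w y) x = pd i v x - pd i w x := by
  unfold pd; rw [fderiv_fun_sub hv hw]; rfl

lemma pd_const_mul (c : ℝ) (hv : DifferentiableAt ℝ v x) :
    pd i (fun y => c * v y) x = c * pd i v x := by
  unfold pd; rw [fderiv_const_mul hv]; rfl

lemma pd_sum {m : Type*} [Fintype m] (V : m → (Fin n → ℝ) → ℝ)
    (hV : ∀ k, DifferentiableAt ℝ (V k) x) :
    pd i (fun y => ∑ k, V k y) x = ∑ k, pd i (V k) x := by
  unfold pd; rw [fderiv_fun_sum (fun k _ => hV k)]; simp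

lemma pd_inv (hv : DifferentiableAt ℝ v x) (h0 : v x ≠ 0) :
    pd i (fun y => (v y)⁻¹) x = -(pd i v x / (v x)^2) := by
  have hev : (fun y => (v y)⁻¹ * v y) =ᶠ[nhds x] (fun _ => (1:ℝ)) := by
    filter_upwards [hv.continuousAt.eventually_ne h0] with y hy
    simp [inv_mul_cancel₀ hy]
  have h1 : pd i (fun y => (v y)⁻¹ * v y) x = 0 := by
    rw [pd_congr hev, pd_const]
  rw [pd_mul (hv.fun_inv h0) hv] at h1
  have h2 : v x ^ 2 ≠ 0 := pow_ne_zero _ h0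
  field_simp at h1 ⊢
  nlinarith [h1]

lemma contDiffAt_pd {m : ℕ} (hv : ContDiffAt ℝ (m+1 : ℕ) v x) (i : Fin n) :
    ContDiffAt ℝ (m : ℕ) (pd i v) x := by
  have h1 : ContDiffAt ℝ (m : ℕ) (fderiv ℝ v) x := by
    apply hv.fderiv_right
    norm_cast
  exact h1.clm_apply contDiffAt_const

lemma pd_differentiableAt {m : ℕ} (hv : ContDiffAt ℝ (m+2 : ℕ) v x) (i : Fin n) :
    DifferentiableAt ℝ (pd i v) x := by
  have := contDiffAt_pd (m := m+1) (by exact_mod_cast hv) i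
  exact this.differentiableAt (by simp)

lemma pd_pd_symm (hv : ContDiffAt ℝ 2 v x) :
    pd i (fun y => pd j v y) x = pd j (fun y => pd i v y) x := by
  have hsym := hv.isSymmSndFDerivAt (by simp)
  have hd : DifferentiableAt ℝ (fderiv ℝ v) x := by
    have : ContDiffAt ℝ (1 : ℕ) (fderiv ℝ v) x := hv.fderiv_right (by norm_num)
    exact this.differentiableAt (by norm_num)
  have key : ∀ a b : Fin n, pd a (fun y => pd b v y) x
      = fderiv ℝ (fderiv ℝ v) x (Pi.single a 1) (Pi.single b 1) := by
    intro a b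
    show fderiv ℝ (fun y => (fderiv ℝ v y) (Pi.single b 1)) x (Pi.single a 1) = _
    rw [fderiv_clm_apply hd (differentiableAt_const _)]
    simp
  rw [key i j, key j i, hsym]

lemma sum_delta_mul (z : Fin n → ℝ) (i : Fin n) :
    ∑ j, (if i = j then (1:ℝ) else 0) * z j = z i := by simp

end helpers

lemma hrow {n : ℕ} (W : Fin n → ℝ) (i : Fin n) (c : ℝ) :
    ∑ j, (W j - c * (if i = j then (1:ℝ) else 0))^2
      = (∑ j, (W j)^2) - 2*c*W i + c^2 := by
  have e : ∀ j, (W j - c * (if i = j then (1:ℝ) else 0))^2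
      = (W j)^2 - (2*c)*((if i = j then (1:ℝ) else 0) * W j)
        + (c^2)*(if i = j then (1:ℝ) else 0) := by
    intro j; by_cases h : i = j <;> simp [h] <;> ring
  rw [Finset.sum_congr rfl (fun j _ => e j)]
  rw [Finset.sum_add_distrib, Finset.sum_sub_distrib, ← Finset.mul_sum, ← Finset.mul_sum]
  simp [Finset.sum_ite_eq]

set_option maxHeartbeats 1600000 in
lemma final_algebra {n : ℕ} (F Uu L M : ℝ) (hF : F ≠ 0) (hnn : (n:ℝ) ≠ 0)
    (a b cf du : Fin n → ℝ) (P Q TU TF : Fin n → Fin n → ℝ)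
    (hPsym : ∀ i j, P i j = P j i) (hQsym : ∀ i j, Q i j = Q j i)
    (hTU : ∀ j, ∑ i, TU i j = du j) (hTF : ∀ j, ∑ i, TF i j = cf j)
    (hL : ∑ i, P i i = L) (hM : ∑ i, Q i i = M)
    (hPDE : M = -1 + L / F * Uu)
    (hPDE' : ∀ j, du j = (cf j * F⁻¹ + L * (-(a j / F ^ 2))) * Uu + L * F⁻¹ * b j) :
    ∑ i, ((a i * (∑ j, 2 * (b j * Q i j))
        + F * (∑ j, 2 * (Q i j * Q i j + b j * TU i j)))
      + (2/(n:ℝ)) * (a i * b i + F * Q i i)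
      - (∑ j, (TF i j * (2 * (Uu * b j)) + P i j * (2 * (b i * b j + Uu * Q i j))))
      - (2/(n:ℝ)) * (b i * a i + Uu * P i i)
      - ((2 * b i) * (∑ j, Q i j * a j)
          + (2 * Uu) * (∑ j, (TU i j * a j + Q i j * P i j)))
      + ((2 * (b i * Uu + Uu * b i) * F⁻¹ + 2 * (Uu * Uu) * (-(a i / F ^ 2)))
            * (∑ j, P i j * a j)
          + 2 * (Uu * Uu) * F⁻¹ * (∑ j, (TF i j * a j + P i j * P i j))))
    = 2 * F * (∑ i, ∑ j, ((Q i j - Uu / F * P i j)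
          - (M / (n:ℝ) - Uu / F * (L / (n:ℝ))) * (if i = j then (1:ℝ) else 0)) ^ 2)
      + 2 * (∑ i, (L * (b i - Uu / F * a i) - ∑ j, P i j * (b j - Uu / F * a j))
          * (b i - Uu / F * a i)) := by
  set c : ℝ := M / (n:ℝ) - Uu / F * (L / (n:ℝ)) with hc
  -- per-i inner-sum normalizations
  have m1 : ∀ i : Fin n, (∑ j, 2 * (b j * Q i j)) = 2 * (∑ j, Q i j * b j) := by
    intro i
    simp only [Finset.mul_sum]
    exact Finset.sum_congr rfl fun j _ => by ring
  have m2 : ∀ i : Fin n, (∑ j, 2 * (Q i j * Q i j + b j * TU i j))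
      = 2 * (∑ j, Q i j * Q i j) + 2 * (∑ j, b j * TU i j) := by
    intro i
    simp only [Finset.mul_sum, ← Finset.sum_add_distrib]
    exact Finset.sum_congr rfl fun j _ => by ring
  have m3 : ∀ i : Fin n, (∑ j, (TF i j * (2 * (Uu * b j)) + P i j * (2 * (b i * b j + Uu * Q i j))))
      = 2 * (Uu * (∑ j, TF i j * b j)) + (2 * (b i * (∑ j, P i j * b j))
          + 2 * (Uu * (∑ j, P i j * Q i j))) := by
    intro i
    simp only [Finset.mul_sum, ← Finset.sum_add_distrib]
    exact Finset.sum_congr rfl fun j _ => by ring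
  have m5 : ∀ i : Fin n, (∑ j, (TU i j * a j + Q i j * P i j))
      = (∑ j, TU i j * a j) + (∑ j, P i j * Q i j) := by
    intro i
    simp only [← Finset.sum_add_distrib]
    exact Finset.sum_congr rfl fun j _ => by ring
  have m6 : ∀ i : Fin n, (∑ j, (TF i j * a j + P i j * P i j))
      = (∑ j, TF i j * a j) + (∑ j, P i j * P i j) := by
    intro i
    simp only [← Finset.sum_add_distrib]
  -- global swap lemmas
  have g1 : ∑ i, a i * (∑ j, Q i j * b j) = ∑ i, b i * (∑ j, Q i j * a j) := by
    simp only [Finset.mul_sum]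
    rw [Finset.sum_comm]
    exact Finset.sum_congr rfl fun k _ => Finset.sum_congr rfl fun l _ => by
      rw [hQsym l k]; ring
  have g2 : ∑ i, a i * (∑ j, P i j * b j) = ∑ i, b i * (∑ j, P i j * a j) := by
    simp only [Finset.mul_sum]
    rw [Finset.sum_comm]
    exact Finset.sum_congr rfl fun k _ => Finset.sum_congr rfl fun l _ => by
      rw [hPsym l k]; ring
  -- third-derivative reductions
  have g37 : ∑ i, ∑ j, b j * TU i j
      = Uu * F⁻¹ * (∑ j, cf j * b j) + L * F⁻¹ * (∑ j, b j * b j)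
        + (-(L * Uu / F^2)) * (∑ j, a j * b j) := by
    rw [Finset.sum_comm]
    have h1 : ∀ j : Fin n, ∑ i, b j * TU i j = b j * du j := by
      intro j; rw [← Finset.mul_sum, hTU j]
    rw [Finset.sum_congr rfl fun j _ => h1 j]
    have h2 : ∀ j : Fin n, b j * du j
        = Uu * F⁻¹ * (cf j * b j) + L * F⁻¹ * (b j * b j) + (-(L * Uu / F^2)) * (a j * b j) := by
      intro j; rw [hPDE' j]; ring
    rw [Finset.sum_congr rfl fun j _ => h2 j]
    simp only [Finset.sum_add_distrib, ← Finset.mul_sum]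
  have g48 : ∑ i, ∑ j, TU i j * a j
      = Uu * F⁻¹ * (∑ j, cf j * a j) + L * F⁻¹ * (∑ j, a j * b j)
        + (-(L * Uu / F^2)) * (∑ j, a j * a j) := by
    rw [Finset.sum_comm]
    have h1 : ∀ j : Fin n, ∑ i, TU i j * a j = du j * a j := by
      intro j; rw [← Finset.sum_mul, hTU j]
    rw [Finset.sum_congr rfl fun j _ => h1 j]
    have h2 : ∀ j : Fin n, du j * a j
        = Uu * F⁻¹ * (cf j * a j) + L * F⁻¹ * (a j * b j) + (-(L * Uu / F^2)) * (a j * a j) := by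
      intro j; rw [hPDE' j]; ring
    rw [Finset.sum_congr rfl fun j _ => h2 j]
    simp only [Finset.sum_add_distrib, ← Finset.mul_sum]
  have gtfb : ∑ i, ∑ j, TF i j * b j = ∑ j, cf j * b j := by
    rw [Finset.sum_comm]
    exact Finset.sum_congr rfl fun j _ => by rw [← Finset.sum_mul, hTF j]
  have gtfa : ∑ i, ∑ j, TF i j * a j = ∑ j, cf j * a j := by
    rw [Finset.sum_comm]
    exact Finset.sum_congr rfl fun j _ => by rw [← Finset.sum_mul, hTF j]
  -- expand the RHS rows
  have r1i : ∀ i : Fin n, ∑ j, ((Q i j - Uu / F * P i j) - c * (if i = j then (1:ℝ) else 0)) ^ 2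
      = (∑ j, Q i j * Q i j) - (2 * (Uu/F)) * (∑ j, P i j * Q i j)
        + ((Uu/F)^2) * (∑ j, P i j * P i j)
        - 2 * c * (Q i i - Uu / F * P i i) + c^2 := by
    intro i
    rw [hrow (fun j => Q i j - Uu / F * P i j) i c]
    have e : ∀ j : Fin n, (Q i j - Uu / F * P i j)^2
        = Q i j * Q i j - (2 * (Uu/F)) * (P i j * Q i j) + ((Uu/F)^2) * (P i j * P i j) := by
      intro j; ring
    rw [Finset.sum_congr rfl fun j _ => e j]
    simp only [Finset.sum_add_distrib, Finset.sum_sub_distrib, ← Finset.mul_sum]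
  have r2i : ∀ i : Fin n, ∑ j, P i j * (b j - Uu / F * a j)
      = (∑ j, P i j * b j) - (Uu/F) * (∑ j, P i j * a j) := by
    intro i
    have e : ∀ j : Fin n, P i j * (b j - Uu / F * a j)
        = P i j * b j - (Uu/F) * (P i j * a j) := fun j => by ring
    rw [Finset.sum_congr rfl fun j _ => e j]
    simp only [Finset.sum_sub_distrib, ← Finset.mul_sum]
  -- put RHS into a single sum
  have hR : 2 * F * (∑ i, ∑ j, ((Q i j - Uu / F * P i j)
          - c * (if i = j then (1:ℝ) else 0)) ^ 2)
      + 2 * (∑ i, (L * (b i - Uu / F * a i) - ∑ j, P i j * (b j - Uu / F * a j))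
          * (b i - Uu / F * a i))
      = ∑ i, ((2*F) * ((∑ j, Q i j * Q i j) - (2 * (Uu/F)) * (∑ j, P i j * Q i j)
            + ((Uu/F)^2) * (∑ j, P i j * P i j)
            - 2 * c * (Q i i - Uu / F * P i i) + c^2)
          + 2 * ((L * (b i - Uu / F * a i)
              - ((∑ j, P i j * b j) - (Uu/F) * (∑ j, P i j * a j)))
            * (b i - Uu / F * a i))) := by
    rw [Finset.mul_sum, Finset.mul_sum, ← Finset.sum_add_distrib]
    exact Finset.sum_congr rfl fun i _ => by rw [r1i i, r2i i]
  rw [hR]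
  -- put LHS into per-i split form
  have hL1 : ∑ i, ((a i * (∑ j, 2 * (b j * Q i j))
        + F * (∑ j, 2 * (Q i j * Q i j + b j * TU i j)))
      + (2/(n:ℝ)) * (a i * b i + F * Q i i)
      - (∑ j, (TF i j * (2 * (Uu * b j)) + P i j * (2 * (b i * b j + Uu * Q i j))))
      - (2/(n:ℝ)) * (b i * a i + Uu * P i i)
      - ((2 * b i) * (∑ j, Q i j * a j)
          + (2 * Uu) * (∑ j, (TU i j * a j + Q i j * P i j)))
      + ((2 * (b i * Uu + Uu * b i) * F⁻¹ + 2 * (Uu * Uu) * (-(a i / F ^ 2)))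
            * (∑ j, P i j * a j)
          + 2 * (Uu * Uu) * F⁻¹ * (∑ j, (TF i j * a j + P i j * P i j))))
      = ∑ i, (2 * (a i * (∑ j, Q i j * b j)) + 2 * (F * (∑ j, Q i j * Q i j))
          + 2 * (F * (∑ j, b j * TU i j))
          + (2/(n:ℝ)) * (a i * b i) + (2/(n:ℝ)) * (F * Q i i)
          - 2 * (Uu * (∑ j, TF i j * b j)) - 2 * (b i * (∑ j, P i j * b j))
          - 4 * (Uu * (∑ j, P i j * Q i j))
          - (2/(n:ℝ)) * (a i * b i) - (2/(n:ℝ)) * (Uu * P i i)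
          - 2 * (b i * (∑ j, Q i j * a j)) - 2 * (Uu * (∑ j, TU i j * a j))
          + 4 * (Uu * F⁻¹ * (b i * (∑ j, P i j * a j)))
          - 2 * (Uu * Uu / F^2 * (a i * (∑ j, P i j * a j)))
          + 2 * (Uu * Uu * F⁻¹ * (∑ j, TF i j * a j))
          + 2 * (Uu * Uu * F⁻¹ * (∑ j, P i j * P i j))) := by
    refine Finset.sum_congr rfl fun i _ => ?_
    rw [m1 i, m2 i, m3 i, m5 i, m6 i]
    ring
  rw [hL1]
  -- also split the RHS per-i polynomial, then fully split both sides into global sums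
  have hR1 : ∀ i : Fin n, ((2*F) * ((∑ j, Q i j * Q i j) - (2 * (Uu/F)) * (∑ j, P i j * Q i j)
            + ((Uu/F)^2) * (∑ j, P i j * P i j)
            - 2 * c * (Q i i - Uu / F * P i i) + c^2)
          + 2 * ((L * (b i - Uu / F * a i)
              - ((∑ j, P i j * b j) - (Uu/F) * (∑ j, P i j * a j)))
            * (b i - Uu / F * a i)))
      = (2 * (F * (∑ j, Q i j * Q i j)) - 2*F*(2*(Uu/F)) * (∑ j, P i j * Q i j)
          + 2*F*((Uu/F)^2) * (∑ j, P i j * P i j)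
          - 4*F*c * Q i i + 4*F*c*(Uu/F) * P i i + 2*F*(c*c)
          + 2*L * (b i * b i) - 4*L*(Uu/F) * (a i * b i) + 2*L*((Uu/F)^2) * (a i * a i)
          - 2 * (b i * (∑ j, P i j * b j)) + 2*(Uu/F) * (a i * (∑ j, P i j * b j))
          + 2*(Uu/F) * (b i * (∑ j, P i j * a j))
          - 2*((Uu/F)*(Uu/F)) * (a i * (∑ j, P i j * a j))) := by
    intro i; ring
  rw [Finset.sum_congr rfl fun i _ => hR1 i]
  simp only [Finset.sum_add_distrib, Finset.sum_sub_distrib]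
  simp only [← Finset.mul_sum, Finset.sum_const, Finset.card_univ, Fintype.card_fin,
    nsmul_eq_mul]
  rw [g1, g2, g37, g48, gtfb, gtfa, hM, hL, hc, hPDE]
  field_simp
  ring

theorem stmt1 {n : ℕ} (hn : 2 ≤ n) {U : Set (Fin n → ℝ)} (hU : IsOpen U)
    (f u : (Fin n → ℝ) → ℝ)
    (hf : ContDiffOn ℝ 3 f U) (hfpos : ∀ x ∈ U, 0 < f x)
    (hu : ContDiffOn ℝ 3 u U)
    (heq : ∀ x ∈ U, lap u x = -1 + (lap f x / f x) * u x)
    (X : (Fin n → ℝ) → (Fin n → ℝ))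
    (hX : ∀ y, X y =
      f y • grad (fun z => dotp (grad u z) (grad u z)) y
      + (2 / (n : ℝ)) • (f y • grad u y)
      - (hess f y).mulVec (grad (fun z => (u z) ^ 2) y)
      - (2 / (n : ℝ)) • (u y • grad f y)
      - (2 * u y) • ((hess u y).mulVec (grad f y))
      + (2 * (u y) ^ 2 / f y) • ((hess f y).mulVec (grad f y)))
    (hsubstatic : ∀ x ∈ U,
      (lap f x • (1 : Matrix (Fin n) (Fin n) ℝ) - hess f x).PosSemidef) :
    ∀ x ∈ U,
      0 ≤ divg X x ∧
      2 * f x *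
        frobSq (hess u x - (lap u x / (n : ℝ)) • (1 : Matrix (Fin n) (Fin n) ℝ)
          - (u x / f x) • (hess f x - (lap f x / (n : ℝ)) • (1 : Matrix (Fin n) (Fin n) ℝ)))
        ≤ divg X x := by
  intro x hx
  -- ### smoothness database on U
  have hcf3 : ∀ y ∈ U, ContDiffAt ℝ ((2+1 : ℕ)) f y := fun y hy => by
    exact_mod_cast hf.contDiffAt (hU.mem_nhds hy)
  have hcu3 : ∀ y ∈ U, ContDiffAt ℝ ((2+1 : ℕ)) u y := fun y hy => by
    exact_mod_cast hu.contDiffAt (hU.mem_nhds hy)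
  have hdf : ∀ y ∈ U, DifferentiableAt ℝ f y := fun y hy =>
    (hcf3 y hy).differentiableAt (by norm_num)
  have hdu : ∀ y ∈ U, DifferentiableAt ℝ u y := fun y hy =>
    (hcu3 y hy).differentiableAt (by norm_num)
  have hcpf : ∀ y ∈ U, ∀ j, ContDiffAt ℝ ((2 : ℕ)) (pd j f) y := fun y hy j =>
    contDiffAt_pd (m := 2) (hcf3 y hy) j
  have hcpu : ∀ y ∈ U, ∀ j, ContDiffAt ℝ ((2 : ℕ)) (pd j u) y := fun y hy j =>
    contDiffAt_pd (m := 2) (hcu3 y hy) j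
  have hdpf : ∀ y ∈ U, ∀ j, DifferentiableAt ℝ (pd j f) y := fun y hy j =>
    (hcpf y hy j).differentiableAt (by norm_num)
  have hdpu : ∀ y ∈ U, ∀ j, DifferentiableAt ℝ (pd j u) y := fun y hy j =>
    (hcpu y hy j).differentiableAt (by norm_num)
  have hdppf : ∀ y ∈ U, ∀ i j, DifferentiableAt ℝ (pd i (pd j f)) y := fun y hy i j =>
    pd_differentiableAt (m := 0) (by exact_mod_cast hcpf y hy j) i
  have hdppu : ∀ y ∈ U, ∀ i j, DifferentiableAt ℝ (pd i (pd j u)) y := fun y hy i j =>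
    pd_differentiableAt (m := 0) (by exact_mod_cast hcpu y hy j) i
  have hF0 : ∀ y ∈ U, f y ≠ 0 := fun y hy => (hfpos y hy).ne'
  -- G := |∇u|²  and u² smoothness
  set G : (Fin n → ℝ) → ℝ := fun z => dotp (grad u z) (grad u z) with hGdef
  have hGsum : G = fun z => ∑ j, pd j u z * pd j u z := by
    funext z; simp [hGdef, dotp, grad]
  have hcG : ∀ y ∈ U, ContDiffAt ℝ ((1+1 : ℕ)) G y := by
    intro y hy
    rw [hGsum]
    exact ContDiffAt.sum fun j _ => by
      exact_mod_cast (hcpu y hy j).mul (hcpu y hy j)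
  have hdG : ∀ y ∈ U, DifferentiableAt ℝ G y := fun y hy =>
    (hcG y hy).differentiableAt (by norm_num)
  have hdpG : ∀ y ∈ U, ∀ i, DifferentiableAt ℝ (pd i G) y := fun y hy i =>
    pd_differentiableAt (m := 0) (by exact_mod_cast hcG y hy) i
  have hcu2 : ∀ y ∈ U, ContDiffAt ℝ ((1+1 : ℕ)) (fun z => u z ^ 2) y := by
    intro y hy
    have : ContDiffAt ℝ ((1+1 : ℕ)) (fun z => u z * u z) y := by
      exact_mod_cast ((hcu3 y hy).of_le (by norm_cast)).mul ((hcu3 y hy).of_le (by norm_cast))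
    simpa [pow_two] using this
  have hdu2 : ∀ y ∈ U, DifferentiableAt ℝ (fun z => u z ^ 2) y := fun y hy =>
    (hcu2 y hy).differentiableAt (by norm_num)
  have hdpu2 : ∀ y ∈ U, ∀ j, DifferentiableAt ℝ (pd j (fun z => u z ^ 2)) y := fun y hy j =>
    pd_differentiableAt (m := 0) (by exact_mod_cast hcu2 y hy) j
  have hdinv : ∀ y ∈ U, DifferentiableAt ℝ (fun z => (f z)⁻¹) y := fun y hy =>
    (hdf y hy).inv (hF0 y hy)
  -- ### eventual identities on U
  have hGev : ∀ i, ∀ y ∈ U, pd i G y = ∑ j, 2 * (pd j u y * pd i (pd j u) y) := by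
    intro i y hy
    rw [hGsum]
    rw [pd_sum _ (fun j => (hdpu y hy j).fun_mul (hdpu y hy j))]
    refine Finset.sum_congr rfl fun j _ => ?_
    rw [pd_mul (hdpu y hy j) (hdpu y hy j)]; ring
  have hu2ev : ∀ j, ∀ y ∈ U, pd j (fun z => u z ^ 2) y = 2 * (u y * pd j u y) := by
    intro j y hy
    have : (fun z => u z ^ 2) = fun z => u z * u z := by funext z; ring
    rw [this, pd_mul (hdu y hy) (hdu y hy)]; ring
  have hUx : U ∈ nhds x := hU.mem_nhds hx
  have hGev' : ∀ i : Fin n, (fun y => pd i G y) =ᶠ[nhds x]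
      (fun y => ∑ j, 2 * (pd j u y * pd i (pd j u) y)) := fun i =>
    Filter.eventuallyEq_of_mem hUx (fun y hy => hGev i y hy)
  have hu2ev' : ∀ j : Fin n, (fun y => pd j (fun z => u z ^ 2) y) =ᶠ[nhds x]
      (fun y => 2 * (u y * pd j u y)) := fun j =>
    Filter.eventuallyEq_of_mem hUx (fun y hy => hu2ev j y hy)
  have hXfun : ∀ i : Fin n, (fun y => X y i) = (fun y =>
      f y * pd i G y
      + (2/(n:ℝ)) * (f y * pd i u y)
      - (∑ j, pd i (pd j f) y * pd j (fun z => u z ^ 2) y)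
      - (2/(n:ℝ)) * (u y * pd i f y)
      - (2 * u y) * (∑ j, pd i (pd j u) y * pd j f y)
      + (2 * u y ^ 2 / f y) * (∑ j, pd i (pd j f) y * pd j f y)) := by
    intro i
    funext y
    rw [hX y]
    simp only [Pi.add_apply, Pi.sub_apply, Pi.smul_apply, smul_eq_mul, Matrix.mulVec,
      dotProduct, grad, hess]
  -- ### the raw divergence computation, term by term
  have hD : ∀ i : Fin n, pd i (fun y => X y i) x =
      (pd i f x * (∑ j, 2 * (pd j u x * pd i (pd j u) x))
        + f x * (∑ j, 2 * (pd i (pd j u) x * pd i (pd j u) x + pd j u x * pd i (pd i (pd j u)) x)))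
      + (2/(n:ℝ)) * (pd i f x * pd i u x + f x * pd i (pd i u) x)
      - (∑ j, (pd i (pd i (pd j f)) x * (2 * (u x * pd j u x))
          + pd i (pd j f) x * (2 * (pd i u x * pd j u x + u x * pd i (pd j u) x))))
      - (2/(n:ℝ)) * (pd i u x * pd i f x + u x * pd i (pd i f) x)
      - ((2 * pd i u x) * (∑ j, pd i (pd j u) x * pd j f x)
          + (2 * u x) * (∑ j, (pd i (pd i (pd j u)) x * pd j f x + pd i (pd j u) x * pd i (pd j f) x)))
      + ((2 * (pd i u x * u x + u x * pd i u x) * (f x)⁻¹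
            + 2 * (u x * u x) * (-(pd i f x / f x ^ 2))) * (∑ j, pd i (pd j f) x * pd j f x)
          + 2 * (u x * u x) * (f x)⁻¹ * (∑ j, (pd i (pd i (pd j f)) x * pd j f x
              + pd i (pd j f) x * pd i (pd j f) x))) := by
    intro i
    have dT1 : DifferentiableAt ℝ (fun y => f y * pd i G y) x := (hdf x hx).mul (hdpG x hx i)
    have dT2 : DifferentiableAt ℝ (fun y => (2/(n:ℝ)) * (f y * pd i u y)) x :=
      ((hdf x hx).mul (hdpu x hx i)).const_mul _
    have dT3 : DifferentiableAt ℝ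
        (fun y => ∑ j, pd i (pd j f) y * pd j (fun z => u z ^ 2) y) x :=
      DifferentiableAt.fun_sum fun j _ => (hdppf x hx i j).mul (hdpu2 x hx j)
    have dT4 : DifferentiableAt ℝ (fun y => (2/(n:ℝ)) * (u y * pd i f y)) x :=
      ((hdu x hx).mul (hdpf x hx i)).const_mul _
    have dS5 : DifferentiableAt ℝ (fun y => ∑ j, pd i (pd j u) y * pd j f y) x :=
      DifferentiableAt.fun_sum fun j _ => (hdppu x hx i j).mul (hdpf x hx j)
    have dT5 : DifferentiableAt ℝ
        (fun y => (2 * u y) * (∑ j, pd i (pd j u) y * pd j f y)) x :=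
      ((hdu x hx).const_mul 2).mul dS5
    have dS6 : DifferentiableAt ℝ (fun y => ∑ j, pd i (pd j f) y * pd j f y) x :=
      DifferentiableAt.fun_sum fun j _ => (hdppf x hx i j).mul (hdpf x hx j)
    have dv6a : DifferentiableAt ℝ (fun y => 2 * (u y * u y)) x :=
      ((hdu x hx).mul (hdu x hx)).const_mul 2
    have dv6 : DifferentiableAt ℝ (fun y => 2 * (u y * u y) * (f y)⁻¹) x :=
      dv6a.mul (hdinv x hx)
    have dT6 : DifferentiableAt ℝ
        (fun y => (2 * u y ^ 2 / f y) * (∑ j, pd i (pd j f) y * pd j f y)) x := by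
      have : DifferentiableAt ℝ
          (fun y => (2 * (u y * u y) * (f y)⁻¹) * (∑ j, pd i (pd j f) y * pd j f y)) x :=
        dv6.mul dS6
      convert this using 2 with y
      ring
    -- split the six terms
    rw [hXfun i]
    rw [pd_add ((((dT1.fun_add dT2).fun_sub dT3).fun_sub dT4).fun_sub dT5) dT6,
        pd_sub (((dT1.fun_add dT2).fun_sub dT3).fun_sub dT4) dT5,
        pd_sub ((dT1.fun_add dT2).fun_sub dT3) dT4,
        pd_sub (dT1.fun_add dT2) dT3,
        pd_add dT1 dT2]
    -- term 1
    have e1 : pd i (fun y => f y * pd i G y) x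
        = pd i f x * (∑ j, 2 * (pd j u x * pd i (pd j u) x))
          + f x * (∑ j, 2 * (pd i (pd j u) x * pd i (pd j u) x
              + pd j u x * pd i (pd i (pd j u)) x)) := by
      have inner : ∀ j : Fin n, pd i (fun y => 2 * (pd j u y * pd i (pd j u) y)) x
          = 2 * (pd i (pd j u) x * pd i (pd j u) x + pd j u x * pd i (pd i (pd j u)) x) :=
        fun j => by
          rw [pd_const_mul 2 ((hdpu x hx j).fun_mul (hdppu x hx i j)),
            pd_mul (hdpu x hx j) (hdppu x hx i j)]
      rw [pd_mul (hdf x hx) (hdpG x hx i), hGev i x hx,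
        pd_congr (hGev' i),
        pd_sum _ (fun j => ((hdpu x hx j).fun_mul (hdppu x hx i j)).const_mul 2)]
      simp only [inner]
    -- term 2
    have e2 : pd i (fun y => (2/(n:ℝ)) * (f y * pd i u y)) x
        = (2/(n:ℝ)) * (pd i f x * pd i u x + f x * pd i (pd i u) x) := by
      rw [pd_const_mul _ ((hdf x hx).fun_mul (hdpu x hx i)), pd_mul (hdf x hx) (hdpu x hx i)]
    -- term 3
    have e3 : pd i (fun y => ∑ j, pd i (pd j f) y * pd j (fun z => u z ^ 2) y) x
        = ∑ j, (pd i (pd i (pd j f)) x * (2 * (u x * pd j u x))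
            + pd i (pd j f) x * (2 * (pd i u x * pd j u x + u x * pd i (pd j u) x))) := by
      rw [pd_sum _ (fun j => (hdppf x hx i j).fun_mul (hdpu2 x hx j))]
      refine Finset.sum_congr rfl fun j _ => ?_
      rw [pd_mul (hdppf x hx i j) (hdpu2 x hx j), hu2ev j x hx,
        pd_congr (hu2ev' j), pd_const_mul 2 ((hdu x hx).fun_mul (hdpu x hx j)),
        pd_mul (hdu x hx) (hdpu x hx j)]
    -- term 4
    have e4 : pd i (fun y => (2/(n:ℝ)) * (u y * pd i f y)) x
        = (2/(n:ℝ)) * (pd i u x * pd i f x + u x * pd i (pd i f) x) := by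
      rw [pd_const_mul _ ((hdu x hx).fun_mul (hdpf x hx i)), pd_mul (hdu x hx) (hdpf x hx i)]
    -- term 5
    have e5 : pd i (fun y => (2 * u y) * (∑ j, pd i (pd j u) y * pd j f y)) x
        = (2 * pd i u x) * (∑ j, pd i (pd j u) x * pd j f x)
          + (2 * u x) * (∑ j, (pd i (pd i (pd j u)) x * pd j f x
              + pd i (pd j u) x * pd i (pd j f) x)) := by
      have inner : ∀ j : Fin n, pd i (fun y => pd i (pd j u) y * pd j f y) x
          = pd i (pd i (pd j u)) x * pd j f x + pd i (pd j u) x * pd i (pd j f) x :=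
        fun j => by rw [pd_mul (hdppu x hx i j) (hdpf x hx j)]
      rw [pd_mul ((hdu x hx).const_mul 2) dS5,
        pd_const_mul 2 (hdu x hx),
        pd_sum _ (fun j => (hdppu x hx i j).fun_mul (hdpf x hx j))]
      simp only [inner]
    -- term 6
    have e6 : pd i (fun y => (2 * u y ^ 2 / f y) * (∑ j, pd i (pd j f) y * pd j f y)) x
        = (2 * (pd i u x * u x + u x * pd i u x) * (f x)⁻¹
            + 2 * (u x * u x) * (-(pd i f x / f x ^ 2))) * (∑ j, pd i (pd j f) x * pd j f x)
          + 2 * (u x * u x) * (f x)⁻¹ * (∑ j, (pd i (pd i (pd j f)) x * pd j f x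
              + pd i (pd j f) x * pd i (pd j f) x)) := by
      rw [show (fun y => (2 * u y ^ 2 / f y) * (∑ j, pd i (pd j f) y * pd j f y))
          = (fun y => (2 * (u y * u y) * (f y)⁻¹) * (∑ j, pd i (pd j f) y * pd j f y)) from
        funext fun y => by ring]
      have inner : ∀ j : Fin n, pd i (fun y => pd i (pd j f) y * pd j f y) x
          = pd i (pd i (pd j f)) x * pd j f x + pd i (pd j f) x * pd i (pd j f) x :=
        fun j => by rw [pd_mul (hdppf x hx i j) (hdpf x hx j)]
      rw [pd_mul dv6 dS6,
        pd_mul dv6a (hdinv x hx),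
        pd_const_mul 2 ((hdu x hx).fun_mul (hdu x hx)),
        pd_mul (hdu x hx) (hdu x hx),
        pd_inv (hdf x hx) (hF0 x hx),
        pd_sum _ (fun j => (hdppf x hx i j).fun_mul (hdpf x hx j))]
      simp only [inner]
    rw [e1, e2, e3, e4, e5, e6]
    -- ### symmetry of second and third derivatives
  have hcast23 : ((2:ℕ) : WithTop ℕ∞) ≤ ((2+1:ℕ) : WithTop ℕ∞) := by
    exact_mod_cast (by norm_num : (2:ℕ) ≤ 2+1)
  have hcu2at : ∀ y ∈ U, ContDiffAt ℝ 2 u y := fun y hy => by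
    exact_mod_cast (hcu3 y hy).of_le hcast23
  have hcf2at : ∀ y ∈ U, ContDiffAt ℝ 2 f y := fun y hy => by
    exact_mod_cast (hcf3 y hy).of_le hcast23
  have hcpu2 : ∀ i : Fin n, ContDiffAt ℝ 2 (pd i u) x := fun i => by
    exact_mod_cast hcpu x hx i
  have hcpf2 : ∀ i : Fin n, ContDiffAt ℝ 2 (pd i f) x := fun i => by
    exact_mod_cast hcpf x hx i
  have hQsym : ∀ i j : Fin n, pd i (pd j u) x = pd j (pd i u) x := fun i j =>
    pd_pd_symm (hcu2at x hx)
  have hPsym : ∀ i j : Fin n, pd i (pd j f) x = pd j (pd i f) x := fun i j =>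
    pd_pd_symm (hcf2at x hx)
  have hTUswap : ∀ i j : Fin n, pd i (pd i (pd j u)) x = pd j (pd i (pd i u)) x := by
    intro i j
    have h1 : (fun y => pd i (pd j u) y) =ᶠ[nhds x] (fun y => pd j (pd i u) y) :=
      Filter.eventuallyEq_of_mem hUx fun y hy => pd_pd_symm (hcu2at y hy)
    calc pd i (pd i (pd j u)) x = pd i (fun y => pd j (pd i u) y) x := pd_congr h1
      _ = pd j (fun y => pd i (pd i u) y) x := pd_pd_symm (hcpu2 i)
  have hTFswap : ∀ i j : Fin n, pd i (pd i (pd j f)) x = pd j (pd i (pd i f)) x := by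
    intro i j
    have h1 : (fun y => pd i (pd j f) y) =ᶠ[nhds x] (fun y => pd j (pd i f) y) :=
      Filter.eventuallyEq_of_mem hUx fun y hy => pd_pd_symm (hcf2at y hy)
    calc pd i (pd i (pd j f)) x = pd i (fun y => pd j (pd i f) y) x := pd_congr h1
      _ = pd j (fun y => pd i (pd i f) y) x := pd_pd_symm (hcpf2 i)
  have hTUred : ∀ j : Fin n, ∑ i, pd i (pd i (pd j u)) x = ∑ i, pd j (pd i (pd i u)) x :=
    fun j => Finset.sum_congr rfl fun i _ => hTUswap i j
  have hTFred : ∀ j : Fin n, ∑ i, pd i (pd i (pd j f)) x = ∑ i, pd j (pd i (pd i f)) x :=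
    fun j => Finset.sum_congr rfl fun i _ => hTFswap i j
  -- ### differentiating the PDE
  have hFne : f x ≠ 0 := hF0 x hx
  have hnn : (n:ℝ) ≠ 0 := Nat.cast_ne_zero.2 (by omega)
  have hpdlapu : ∀ j : Fin n, pd j (fun y => lap u y) x = ∑ i, pd j (pd i (pd i u)) x := by
    intro j
    have h0 : (fun y => lap u y) = fun y => ∑ i, pd i (pd i u) y := rfl
    rw [h0, pd_sum _ (fun i => hdppu x hx i i)]
  have hev : (fun y => lap u y) =ᶠ[nhds x]
      (fun y => -1 + (∑ i, pd i (pd i f) y) * (f y)⁻¹ * u y) := by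
    refine Filter.eventuallyEq_of_mem hUx fun y hy => ?_
    rw [heq y hy, div_eq_mul_inv]
    rfl
  have dlapf : DifferentiableAt ℝ (fun y => ∑ i, pd i (pd i f) y) x :=
    DifferentiableAt.fun_sum fun i _ => hdppf x hx i i
  have hlapfx : (∑ i, pd i (pd i f) x) = lap f x := rfl
  have hPDE' : ∀ j : Fin n, ∑ i, pd j (pd i (pd i u)) x
      = ((∑ i, pd j (pd i (pd i f)) x) * (f x)⁻¹ + lap f x * (-(pd j f x / f x ^ 2))) * u x
        + lap f x * (f x)⁻¹ * pd j u x := by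
    intro j
    rw [← hpdlapu j, pd_congr hev,
      pd_add (differentiableAt_const (-1 : ℝ)) ((dlapf.fun_mul (hdinv x hx)).fun_mul (hdu x hx)),
      pd_const,
      pd_mul (dlapf.fun_mul (hdinv x hx)) (hdu x hx),
      pd_mul dlapf (hdinv x hx),
      pd_inv (hdf x hx) hFne,
      pd_sum _ (fun i => hdppf x hx i i)]
    rw [zero_add, hlapfx]
  -- ### apply the master algebraic identity
  have halg := final_algebra (f x) (u x) (lap f x) (lap u x) hFne hnn
    (fun i => pd i f x) (fun i => pd i u x)
    (fun j => ∑ i, pd j (pd i (pd i f)) x) (fun j => ∑ i, pd j (pd i (pd i u)) x)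
    (fun i j => pd i (pd j f) x) (fun i j => pd i (pd j u) x)
    (fun i j => pd i (pd i (pd j u)) x) (fun i j => pd i (pd i (pd j f)) x)
    hPsym hQsym hTUred hTFred rfl rfl (heq x hx) hPDE'
  have hdivg : divg X x = 2 * f x * (∑ i, ∑ j, ((pd i (pd j u) x - u x / f x * pd i (pd j f) x)
          - (lap u x / (n:ℝ) - u x / f x * (lap f x / (n:ℝ))) * (if i = j then (1:ℝ) else 0)) ^ 2)
      + 2 * (∑ i, (lap f x * (pd i u x - u x / f x * pd i f x)
          - ∑ j, pd i (pd j f) x * (pd j u x - u x / f x * pd j f x))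
          * (pd i u x - u x / f x * pd i f x)) := by
    have h0 : divg X x = ∑ i, pd i (fun y => X y i) x := rfl
    rw [h0, Finset.sum_congr rfl fun i _ => hD i]
    exact halg
  -- ### identify the Frobenius term
  have hfrobeq : frobSq (hess u x - (lap u x / (n : ℝ)) • (1 : Matrix (Fin n) (Fin n) ℝ)
        - (u x / f x) • (hess f x - (lap f x / (n : ℝ)) • (1 : Matrix (Fin n) (Fin n) ℝ)))
      = ∑ i, ∑ j, ((pd i (pd j u) x - u x / f x * pd i (pd j f) x)
          - (lap u x / (n:ℝ) - u x / f x * (lap f x / (n:ℝ))) * (if i = j then (1:ℝ) else 0)) ^ 2 := by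
    unfold frobSq
    refine Finset.sum_congr rfl fun i _ => Finset.sum_congr rfl fun j _ => ?_
    simp only [Matrix.sub_apply, Matrix.smul_apply, Matrix.one_apply, smul_eq_mul]
    congr 1
    show hess u x i j - lap u x / (n:ℝ) * (if i = j then (1:ℝ) else 0)
        - u x / f x * (hess f x i j - lap f x / (n:ℝ) * (if i = j then (1:ℝ) else 0)) = _
    have h1 : hess u x i j = pd i (pd j u) x := rfl
    have h2 : hess f x i j = pd i (pd j f) x := rfl
    rw [h1, h2]
    ring
  -- ### positivity of the substatic quadratic form
  have hpsd : 0 ≤ ∑ i, (lap f x * (pd i u x - u x / f x * pd i f x)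
      - ∑ j, pd i (pd j f) x * (pd j u x - u x / f x * pd j f x))
      * (pd i u x - u x / f x * pd i f x) := by
    have h := (hsubstatic x hx).dotProduct_mulVec_nonneg (fun i => pd i u x - u x / f x * pd i f x)
    have heqq : dotProduct (star (fun i => pd i u x - u x / f x * pd i f x))
        ((lap f x • (1 : Matrix (Fin n) (Fin n) ℝ) - hess f x).mulVec
          (fun i => pd i u x - u x / f x * pd i f x))
        = ∑ i, (lap f x * (pd i u x - u x / f x * pd i f x)
          - ∑ j, pd i (pd j f) x * (pd j u x - u x / f x * pd j f x))
          * (pd i u x - u x / f x * pd i f x) := by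
      simp only [star_trivial, dotProduct, Matrix.mulVec, Matrix.sub_apply,
        Matrix.smul_apply, Matrix.one_apply, smul_eq_mul]
      refine Finset.sum_congr rfl fun i _ => ?_
      have h2 : ∀ j : Fin n, hess f x i j = pd i (pd j f) x := fun j => rfl
      simp only [h2]
      have e : ∀ j : Fin n, (lap f x * (if i = j then (1:ℝ) else 0) - pd i (pd j f) x)
            * (pd j u x - u x / f x * pd j f x)
          = lap f x * ((if i = j then (1:ℝ) else 0) * (pd j u x - u x / f x * pd j f x))
            - pd i (pd j f) x * (pd j u x - u x / f x * pd j f x) := fun j => by ring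
      rw [Finset.sum_congr rfl fun j _ => e j, Finset.sum_sub_distrib, ← Finset.mul_sum,
        sum_delta_mul]
      ring
    rw [heqq] at h
    exact h
  have hfrobpos : 0 ≤ ∑ i, ∑ j, ((pd i (pd j u) x - u x / f x * pd i (pd j f) x)
      - (lap u x / (n:ℝ) - u x / f x * (lap f x / (n:ℝ))) * (if i = j then (1:ℝ) else 0)) ^ 2 :=
    Finset.sum_nonneg fun i _ => Finset.sum_nonneg fun j _ => sq_nonneg _
  have hfpos' : 0 < f x := hfpos x hx
  constructor
  · rw [hdivg]
    nlinarith [hfrobpos, hpsd, hfpos'.le]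
  · rw [hdivg, hfrobeq]
    nlinarith [hpsd]
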